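/- arXiv:1107.1153 — 3 statements merged into one kernel-verified Lean document; each statement's English description precedes it below -/
import Mathlib

section
/- Let W : [0,1]² → ℝ≥0 be a bounded symmetric measurable function and d = ∫∫ W(x,y) dx dy. Then for every n ≥ 1, the path density t(Pₙ, W) = ∫ ∏_{i=1}^{n} W(x_i, x_{i+1}) dx₁⋯dx_{n+1} satisfies t(Pₙ, W) ≥ dⁿ. -/
open MeasureTheory Real unitInterval
open scoped ENNReal

namespace BlakleyRoyAux

noncomputable def F (V : I → I → ℝ≥0∞) : ℕ → I → ℝ≥0∞
  | 0 => fun _ => 1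
  | (j+1) => fun x => ∫⁻ y : I, V x y * F V j y

lemma F_measurable {V : I → I → ℝ≥0∞} (hV : Measurable (Function.uncurry V)) :
    ∀ j, Measurable (F V j) := by
  intro j
  induction j with
  | zero => exact measurable_const
  | succ j ih =>
      have h : Measurable (fun z : I × I => V z.1 z.2 * F V j z.2) :=
        (hV.comp measurable_id).mul (ih.comp measurable_snd)
      exact h.lintegral_prod_right'


lemma meas_VV {V : I → I → ℝ≥0∞} (hV : Measurable (Function.uncurry V)) {m : ℕ}
    (i j : Fin m) : Measurable fun x : Fin m → I => V (x i) (x j) := by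
  have h : Measurable fun x : Fin m → I => (x i, x j) :=
    Measurable.prodMk (measurable_pi_apply i) (measurable_pi_apply j)
  exact hV.comp h

lemma struct {V : I → I → ℝ≥0∞} (hV : Measurable (Function.uncurry V)) :
    ∀ (n : ℕ) (φ : I → ℝ≥0∞), Measurable φ →
      (∫⁻ x : Fin (n+1) → I, φ (x 0) * ∏ i : Fin n, V (x i.castSucc) (x i.succ))
        = ∫⁻ y : I, φ y * F V n y := by
  intro n
  induction n with
  | zero =>
      intro φ hφ
      simp only [Finset.univ_eq_empty, Finset.prod_empty, mul_one]
      have h := (volume_preserving_funUnique (Fin 1) I).lintegral_comp (f := φ) hφ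
      simp only [MeasurableEquiv.funUnique_apply] at h
      rw [show (∫⁻ y : I, φ y * F V 0 y) = ∫⁻ y : I, φ y by simp [F], ← h]
      rfl
  | succ n ih =>
      intro φ hφ
      -- measure preserving equivalence peeling off the first coordinate
      have MP := (measurePreserving_piFinSuccAbove (fun _ : Fin (n+2) => (volume : Measure I)) 0).symm
      set e := (MeasurableEquiv.piFinSuccAbove (fun _ : Fin (n+2) => I) 0) with he
      have hint : Measurable (fun x : Fin (n+2) → I =>
          φ (x 0) * ∏ i : Fin (n+1), V (x i.castSucc) (x i.succ)) := by
        apply (hφ.comp (measurable_pi_apply 0)).mul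
        apply Finset.measurable_prod
        intro i _
        exact meas_VV hV i.castSucc i.succ
      have key : (∫⁻ x : Fin (n+2) → I, φ (x 0) * ∏ i : Fin (n+1), V (x i.castSucc) (x i.succ))
          = ∫⁻ z : I × (Fin (n+1) → I),
              φ (e.symm z 0) * ∏ i : Fin (n+1), V (e.symm z i.castSucc) (e.symm z i.succ)
              ∂((volume : Measure I).prod (Measure.pi fun _ => (volume : Measure I))) := by
        rw [volume_pi]
        exact (MP.lintegral_comp hint).symm
      rw [key]
      have hev : ∀ (z : I × (Fin (n+1) → I)),
          φ (e.symm z 0) * ∏ i : Fin (n+1), V (e.symm z i.castSucc) (e.symm z i.succ)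
            = φ z.1 * (V z.1 (z.2 0) * ∏ i : Fin n, V (z.2 i.castSucc) (z.2 i.succ)) := by
        rintro ⟨x0, xs⟩
        have hsymm : ⇑e.symm (x0, xs) = Fin.cons x0 xs := by
          rw [he]
          simp only [MeasurableEquiv.piFinSuccAbove_symm_apply, Fin.insertNthEquiv,
            Equiv.coe_fn_mk, Fin.insertNth_zero, cast_eq]
        rw [hsymm, Fin.prod_univ_succ]
        simp only [Fin.castSucc_zero, ← Fin.succ_castSucc, Fin.cons_succ, Fin.cons_zero]
      calc (∫⁻ z : I × (Fin (n+1) → I),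
              φ (e.symm z 0) * ∏ i : Fin (n+1), V (e.symm z i.castSucc) (e.symm z i.succ)
              ∂((volume : Measure I).prod (Measure.pi fun _ => (volume : Measure I))))
          = ∫⁻ z : I × (Fin (n+1) → I),
              φ z.1 * (V z.1 (z.2 0) * ∏ i : Fin n, V (z.2 i.castSucc) (z.2 i.succ))
              ∂((volume : Measure I).prod (Measure.pi fun _ => (volume : Measure I))) := by
            exact lintegral_congr hev
        _ = ∫⁻ x0 : I, ∫⁻ xs : Fin (n+1) → I,
              φ x0 * (V x0 (xs 0) * ∏ i : Fin n, V (xs i.castSucc) (xs i.succ))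
              ∂(Measure.pi fun _ => (volume : Measure I)) := by
            apply lintegral_prod
            apply Measurable.aemeasurable
            apply (hφ.comp measurable_fst).mul
            apply Measurable.mul
            · exact hV.comp (measurable_fst.prodMk ((measurable_pi_apply 0).comp measurable_snd))
            · apply Finset.measurable_prod
              intro i _
              exact (meas_VV hV i.castSucc i.succ).comp measurable_snd
        _ = ∫⁻ x0 : I, φ x0 * F V (n+1) x0 := by
            apply lintegral_congr
            intro x0
            rw [← volume_pi]
            rw [lintegral_const_mul]
            swap
            · apply Measurable.mul
              · exact (hV.comp measurable_id).of_uncurry_left.comp (measurable_pi_apply 0)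
              · apply Finset.measurable_prod
                intro i _
                exact meas_VV hV i.castSucc i.succ
            congr 1
            exact ih (fun y => V x0 y) (hV.comp measurable_id).of_uncurry_left

lemma F_le {V : I → I → ℝ≥0∞} {c : ℝ≥0∞} (hc : ∀ x y, V x y ≤ c) :
    ∀ j x, F V j x ≤ c ^ j := by
  intro j
  induction j with
  | zero => intro x; simp [F]
  | succ j ih =>
      intro x
      calc F V (j+1) x ≤ ∫⁻ _ : I, c * c ^ j :=
            lintegral_mono fun y => mul_le_mul' (hc x y) (ih y)
        _ = c ^ (j+1) := by rw [lintegral_const, measure_univ, mul_one, pow_succ']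

lemma le_F {V : I → I → ℝ≥0∞} {e : ℝ≥0∞} (he : ∀ x y, e ≤ V x y) :
    ∀ j x, e ^ j ≤ F V j x := by
  intro j
  induction j with
  | zero => intro x; simp [F]
  | succ j ih =>
      intro x
      calc e ^ (j+1) = ∫⁻ _ : I, e * e ^ j := by
            rw [lintegral_const, measure_univ, mul_one, pow_succ']
        _ ≤ F V (j+1) x := lintegral_mono fun y => mul_le_mul' (he x y) (ih y)


/-- pointwise factorization used in the Hölder steps -/
lemma hident {a b : ℝ≥0∞} (ha0 : a ≠ 0) (hat : a ≠ ⊤) (hb0 : b ≠ 0) (hbt : b ≠ ⊤)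
    {jr : ℝ} (hjr : 1 ≤ jr) :
    a = (a * b) ^ (1/(jr+1)) * (a * b ^ (-jr⁻¹)) ^ (1/((jr+1)/jr)) := by
  have hjr0 : jr ≠ 0 := by linarith
  have hjr1 : jr + 1 ≠ 0 := by linarith
  have h1 : (1 : ℝ)/((jr+1)/jr) = jr/(jr+1) := by field_simp
  rw [h1]
  rw [ENNReal.mul_rpow_of_nonneg _ _ (by positivity : (0:ℝ) ≤ 1/(jr+1)),
      ENNReal.mul_rpow_of_nonneg _ _ (by positivity : (0:ℝ) ≤ jr/(jr+1)),
      ← ENNReal.rpow_mul b (-jr⁻¹)]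
  have hae : a ^ ((1:ℝ)/(jr+1)) * (a ^ (jr/(jr+1))) = a := by
    rw [← ENNReal.rpow_add _ _ ha0 hat]
    rw [show (1:ℝ)/(jr+1) + jr/(jr+1) = 1 by field_simp; ring]
    exact ENNReal.rpow_one a
  have hbe : b ^ ((1:ℝ)/(jr+1)) * b ^ (-jr⁻¹ * (jr/(jr+1))) = 1 := by
    rw [← ENNReal.rpow_add _ _ hb0 hbt]
    rw [show (1:ℝ)/(jr+1) + -jr⁻¹ * (jr/(jr+1)) = 0 by field_simp; ring]
    exact ENNReal.rpow_zero
  calc a = (a ^ ((1:ℝ)/(jr+1)) * (a ^ (jr/(jr+1)))) *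
        (b ^ ((1:ℝ)/(jr+1)) * b ^ (-jr⁻¹ * (jr/(jr+1)))) := by rw [hae, hbe, mul_one]
    _ = a ^ ((1:ℝ)/(jr+1)) * b ^ ((1:ℝ)/(jr+1)) *
        (a ^ (jr/(jr+1)) * b ^ (-jr⁻¹ * (jr/(jr+1)))) := by ring


lemma rpow_one_div_rpow (x : ℝ≥0∞) {p : ℝ} (hp : p ≠ 0) : (x ^ (1/p)) ^ p = x := by
  rw [← ENNReal.rpow_mul, one_div, inv_mul_cancel₀ hp, ENNReal.rpow_one]

lemma rpow_mul_inv_rpow (x : ℝ≥0∞) {a b : ℝ} (hab : a * b = 1) : (x ^ a) ^ b = x := by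
  rw [← ENNReal.rpow_mul, hab, ENNReal.rpow_one]

variable {V : I → I → ℝ≥0∞} {e c : ℝ≥0∞}

lemma F_ne_zero (he0 : e ≠ 0) (hle : ∀ x y, e ≤ V x y) (j : ℕ) (y : I) :
    F V j y ≠ 0 :=
  fun h => pow_ne_zero j he0 (le_antisymm (h ▸ le_F hle j y) zero_le)

lemma F_ne_top (hc : c ≠ ⊤) (hub : ∀ x y, V x y ≤ c) (j : ℕ) (y : I) :
    F V j y ≠ ⊤ :=
  ((F_le hub j y).trans_lt (ENNReal.pow_ne_top hc).lt_top).ne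

lemma F_one_eq (x : I) : F V 1 x = ∫⁻ y : I, V x y := by
  show (∫⁻ y : I, V x y * F V 0 y) = _
  simp [F]

lemma swap_aux (hV : Measurable (Function.uncurry V)) (hsym : ∀ x y, V x y = V y x)
    {g : I → ℝ≥0∞} (hg : Measurable g) :
    (∫⁻ x : I, ∫⁻ y : I, V x y * g y) = ∫⁻ y : I, F V 1 y * g y := by
  rw [lintegral_lintegral_swap]
  · apply lintegral_congr
    intro y
    rw [lintegral_mul_const _ hV.of_uncurry_right]
    rw [F_one_eq]
    congr 1
    exact lintegral_congr fun x => hsym x y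
  · exact ((hV.comp measurable_id).mul (hg.comp measurable_snd)).aemeasurable

/-- the parametric "negative moment" integral -/
noncomputable def G (V : I → I → ℝ≥0∞) (j : ℕ) (x : I) : ℝ≥0∞ :=
  ∫⁻ y : I, V x y * (F V j y) ^ (-(j:ℝ)⁻¹)

lemma G_measurable (hV : Measurable (Function.uncurry V)) (j : ℕ) :
    Measurable (G V j) := by
  have h : Measurable (fun z : I × I => V z.1 z.2 * (F V j z.2) ^ (-(j:ℝ)⁻¹)) :=
    (hV.comp measurable_id).mul
      (((F_measurable hV j).pow_const _).comp measurable_snd)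
  exact h.lintegral_prod_right'

section Main

variable (hV : Measurable (Function.uncurry V)) (hsym : ∀ x y, V x y = V y x)
  (he0 : e ≠ 0) (hc : c ≠ ⊤) (hle : ∀ x y, e ≤ V x y) (hub : ∀ x y, V x y ≤ c)

include hV hsym he0 hc hle hub

/-- pointwise Hölder step -/
lemma step1 {j : ℕ} (hj : 1 ≤ j) (x : I) :
    F V 1 x ≤ (F V (j+1) x) ^ (1/((j:ℝ)+1)) * (G V j x) ^ ((j:ℝ)/((j:ℝ)+1)) := by
  have hjr : 1 ≤ (j:ℝ) := by exact_mod_cast hj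
  have hjr0 : (j:ℝ) ≠ 0 := by linarith
  have hjr1 : (j:ℝ) + 1 ≠ 0 := by linarith
  have hpq : Real.HolderConjugate ((j:ℝ)+1) (((j:ℝ)+1)/(j:ℝ)) := by
    rw [Real.holderConjugate_iff]
    constructor
    · linarith
    · rw [inv_div]
      field_simp
      ring
  set f : I → ℝ≥0∞ := fun y => (V x y * F V j y) ^ (1/((j:ℝ)+1)) with hf
  set g : I → ℝ≥0∞ := fun y => (V x y * (F V j y) ^ (-(j:ℝ)⁻¹)) ^ (1/(((j:ℝ)+1)/(j:ℝ)))
    with hg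
  have hrw : F V 1 x = ∫⁻ y : I, (f * g) y := by
    rw [F_one_eq]
    apply lintegral_congr
    intro y
    exact hident (fun h => he0 (le_antisymm (h ▸ hle x y) zero_le))
      ((hub x y).trans_lt hc.lt_top).ne
      (F_ne_zero he0 hle j y) (F_ne_top hc hub j y) hjr
  have hfm : Measurable f := ((hV.of_uncurry_left).mul (F_measurable hV j)).pow_const _
  have hgm : Measurable g :=
    ((hV.of_uncurry_left).mul ((F_measurable hV j).pow_const _)).pow_const _
  have H := ENNReal.lintegral_mul_le_Lp_mul_Lq (volume : Measure I) hpq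
    hfm.aemeasurable hgm.aemeasurable
  rw [hrw]
  refine H.trans (le_of_eq ?_)
  have e1 : (∫⁻ y : I, f y ^ ((j:ℝ)+1)) = F V (j+1) x := by
    refine Eq.trans (lintegral_congr fun y => ?_) rfl
    exact rpow_one_div_rpow _ hjr1
  have e2 : (∫⁻ y : I, g y ^ (((j:ℝ)+1)/(j:ℝ))) = G V j x := by
    refine Eq.trans (lintegral_congr fun y => ?_) rfl
    exact rpow_one_div_rpow _ (by positivity)
  rw [e1, e2, one_div (((j:ℝ)+1)/(j:ℝ)), inv_div]

/-- the key inductive lemma: the weighted negative-power integrals are at most 1 -/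
lemma Zlem : ∀ j, 1 ≤ j → (∫⁻ y : I, F V 1 y * (F V j y) ^ (-(j:ℝ)⁻¹)) ≤ 1 := by
  intro j
  induction j with
  | zero => intro h; exact absurd h (by norm_num)
  | succ j ih =>
      intro _
      rcases Nat.eq_zero_or_pos j with hj0 | hj
      · subst hj0
        have hpt : ∀ y : I, F V 1 y * (F V 1 y) ^ (-((0+1:ℕ):ℝ)⁻¹) = 1 := by
          intro y
          rw [show ((0+1:ℕ):ℝ) = 1 by norm_num, inv_one, ENNReal.rpow_neg_one]
          exact ENNReal.mul_inv_cancel (F_ne_zero he0 hle 1 y) (F_ne_top hc hub 1 y)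
        rw [lintegral_congr hpt, lintegral_one, measure_univ]
      · -- inductive step
        have hjr : 1 ≤ (j:ℝ) := by exact_mod_cast hj
        have hjr0 : (j:ℝ) ≠ 0 := by linarith
        have hjr1 : (j:ℝ) + 1 ≠ 0 := by linarith
        have hpq : Real.HolderConjugate ((j:ℝ)+1) (((j:ℝ)+1)/(j:ℝ)) := by
          rw [Real.holderConjugate_iff]
          constructor
          · linarith
          · rw [inv_div]
            field_simp
            ring
        have hcast : ∀ y : I, (F V (j+1) y) ^ (-((j+1:ℕ):ℝ)⁻¹)
            = (F V (j+1) y) ^ (-((j:ℝ)+1)⁻¹) := by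
          intro y
          congr 1
          push_cast
          ring
        have key : ∀ x : I, F V 1 x * (F V (j+1) x) ^ (-((j:ℝ)+1)⁻¹)
            ≤ (G V j x) ^ ((j:ℝ)/((j:ℝ)+1)) := by
          intro x
          have h1 := step1 hV hsym he0 hc hle hub hj x
          have hF0 := F_ne_zero he0 hle (j+1) x
          have hFt := F_ne_top hc hub (j+1) x
          calc F V 1 x * (F V (j+1) x) ^ (-((j:ℝ)+1)⁻¹)
              ≤ ((F V (j+1) x) ^ (1/((j:ℝ)+1)) * (G V j x) ^ ((j:ℝ)/((j:ℝ)+1)))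
                * (F V (j+1) x) ^ (-((j:ℝ)+1)⁻¹) := mul_le_mul_left h1 _
            _ = (G V j x) ^ ((j:ℝ)/((j:ℝ)+1))
                * ((F V (j+1) x) ^ (1/((j:ℝ)+1)) * (F V (j+1) x) ^ (-((j:ℝ)+1)⁻¹)) := by
                ring
            _ = (G V j x) ^ ((j:ℝ)/((j:ℝ)+1)) := by
                rw [← ENNReal.rpow_add _ _ hF0 hFt, one_div, add_neg_cancel,
                  ENNReal.rpow_zero, mul_one]
        calc (∫⁻ y : I, F V 1 y * (F V (j+1) y) ^ (-((j+1:ℕ):ℝ)⁻¹))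
            = ∫⁻ y : I, F V 1 y * (F V (j+1) y) ^ (-((j:ℝ)+1)⁻¹) := by
              exact lintegral_congr fun y => by rw [hcast y]
          _ ≤ ∫⁻ x : I, (G V j x) ^ ((j:ℝ)/((j:ℝ)+1)) := lintegral_mono key
          _ ≤ 1 := by
              -- second Hölder (power mean) step
              set f2 : I → ℝ≥0∞ := fun x => (G V j x) ^ ((j:ℝ)/((j:ℝ)+1)) with hf2
              have hf2m : Measurable f2 := (G_measurable hV j).pow_const _
              have H2 := ENNReal.lintegral_mul_le_Lp_mul_Lq (volume : Measure I) hpq.symm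
                hf2m.aemeasurable (aemeasurable_const (b := (1:ℝ≥0∞)))
              have e3 : (∫⁻ x : I, f2 x ^ (((j:ℝ)+1)/(j:ℝ))) = ∫⁻ x : I, G V j x := by
                apply lintegral_congr
                intro x
                exact rpow_mul_inv_rpow _ (by field_simp)
              have e4 : (∫⁻ x : I, (1:ℝ≥0∞) ^ ((j:ℝ)+1)) = 1 := by
                simp
              have hGle : (∫⁻ x : I, G V j x) ≤ 1 := by
                rw [show (∫⁻ x : I, G V j x)
                    = ∫⁻ x : I, ∫⁻ y : I, V x y * (F V j y) ^ (-(j:ℝ)⁻¹) from rfl]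
                rw [swap_aux hV hsym ((F_measurable hV j).pow_const _)]
                exact ih hj
              calc (∫⁻ x : I, f2 x) = ∫⁻ x : I, f2 x * 1 :=
                    lintegral_congr fun x => (mul_one _).symm
                _ ≤ (∫⁻ x : I, f2 x ^ (((j:ℝ)+1)/(j:ℝ))) ^ (1/(((j:ℝ)+1)/(j:ℝ)))
                    * (∫⁻ x : I, (1:ℝ≥0∞) ^ ((j:ℝ)+1)) ^ (1/((j:ℝ)+1)) := H2
                _ = (∫⁻ x : I, G V j x) ^ ((j:ℝ)/((j:ℝ)+1)) := by
                    rw [e3, e4, ENNReal.one_rpow, mul_one, one_div, inv_div]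
                _ ≤ 1 ^ ((j:ℝ)/((j:ℝ)+1)) :=
                    ENNReal.rpow_le_rpow hGle (by positivity)
                _ = 1 := ENNReal.one_rpow _

/-- the core inequality -/
lemma core (n : ℕ) (hn : 1 ≤ n) :
    (∫⁻ x : I, F V 1 x) ^ n ≤ ∫⁻ x : I, F V n x := by
  rcases n with _ | j
  · exact absurd hn (by norm_num)
  rcases Nat.eq_zero_or_pos j with hj0 | hj
  · subst hj0
    rw [pow_one]
  have hjr : 1 ≤ (j:ℝ) := by exact_mod_cast hj
  have hjr0 : (j:ℝ) ≠ 0 := by linarith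
  have hjr1 : (j:ℝ) + 1 ≠ 0 := by linarith
  have hpq : Real.HolderConjugate ((j:ℝ)+1) (((j:ℝ)+1)/(j:ℝ)) := by
    rw [Real.holderConjugate_iff]
    constructor
    · linarith
    · rw [inv_div]
      field_simp
      ring
  have hD : (∫⁻ x : I, F V 1 x) ≤ (∫⁻ x : I, F V (j+1) x) ^ (1/((j:ℝ)+1)) := by
    set f : I → ℝ≥0∞ := fun x => (F V (j+1) x) ^ (1/((j:ℝ)+1)) with hf
    set g : I → ℝ≥0∞ := fun x => (G V j x) ^ ((j:ℝ)/((j:ℝ)+1)) with hg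
    have hfm : Measurable f := (F_measurable hV (j+1)).pow_const _
    have hgm : Measurable g := (G_measurable hV j).pow_const _
    have H := ENNReal.lintegral_mul_le_Lp_mul_Lq (volume : Measure I) hpq
      hfm.aemeasurable hgm.aemeasurable
    have e1 : (∫⁻ x : I, f x ^ ((j:ℝ)+1)) = ∫⁻ x : I, F V (j+1) x :=
      lintegral_congr fun x => rpow_one_div_rpow _ hjr1
    have e2 : (∫⁻ x : I, g x ^ (((j:ℝ)+1)/(j:ℝ))) = ∫⁻ x : I, G V j x :=
      lintegral_congr fun x => rpow_mul_inv_rpow _ (by field_simp)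
    have hGle : (∫⁻ x : I, G V j x) ≤ 1 := by
      rw [show (∫⁻ x : I, G V j x)
          = ∫⁻ x : I, ∫⁻ y : I, V x y * (F V j y) ^ (-(j:ℝ)⁻¹) from rfl]
      rw [swap_aux hV hsym ((F_measurable hV j).pow_const _)]
      exact Zlem hV hsym he0 hc hle hub j hj
    calc (∫⁻ x : I, F V 1 x) ≤ ∫⁻ x : I, (f * g) x :=
          lintegral_mono fun x => step1 hV hsym he0 hc hle hub hj x
      _ ≤ (∫⁻ x : I, f x ^ ((j:ℝ)+1)) ^ (1/((j:ℝ)+1))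
          * (∫⁻ x : I, g x ^ (((j:ℝ)+1)/(j:ℝ))) ^ (1/(((j:ℝ)+1)/(j:ℝ))) := H
      _ = (∫⁻ x : I, F V (j+1) x) ^ (1/((j:ℝ)+1))
          * (∫⁻ x : I, G V j x) ^ ((j:ℝ)/((j:ℝ)+1)) := by
          rw [e1, e2, one_div (((j:ℝ)+1)/(j:ℝ)), inv_div]
      _ ≤ (∫⁻ x : I, F V (j+1) x) ^ (1/((j:ℝ)+1)) * 1 ^ ((j:ℝ)/((j:ℝ)+1)) :=
          mul_le_mul_right (ENNReal.rpow_le_rpow hGle (by positivity)) _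
      _ = (∫⁻ x : I, F V (j+1) x) ^ (1/((j:ℝ)+1)) := by
          rw [ENNReal.one_rpow, mul_one]
  calc (∫⁻ x : I, F V 1 x) ^ (j+1)
      ≤ ((∫⁻ x : I, F V (j+1) x) ^ (1/((j:ℝ)+1))) ^ (j+1) := pow_le_pow_left' hD _
    _ = ∫⁻ x : I, F V (j+1) x := by
        rw [← ENNReal.rpow_natCast _ (j+1), ← ENNReal.rpow_mul]
        rw [show (1/((j:ℝ)+1)) * ((j+1:ℕ):ℝ) = 1 by push_cast; field_simp]
        exact ENNReal.rpow_one _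

end Main

/-- perturbation bound for products -/
lemma prod_eps {ι : Type*} [DecidableEq ι] (s : Finset ι) (a : ι → ℝ≥0∞) (c0 ev : ℝ≥0∞)
    (ha : ∀ i, a i ≤ c0) (he : ev ≤ 1) :
    ∏ i ∈ s, (a i + ev) ≤ ∏ i ∈ s, a i + s.card * ev * (c0+1) ^ s.card := by
  induction s using Finset.induction_on with
  | empty => simp
  | @insert i s hi ih =>
      rw [Finset.prod_insert hi, Finset.prod_insert hi, Finset.card_insert_of_notMem hi]
      have hQ : (∏ j ∈ s, a j) ≤ (c0+1) ^ s.card := by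
        calc (∏ j ∈ s, a j) ≤ ∏ _j ∈ s, (c0+1) :=
              Finset.prod_le_prod' fun j _ => (ha j).trans le_self_add
          _ = (c0+1) ^ s.card := Finset.prod_const _
      set k := s.card
      calc (a i + ev) * ∏ j ∈ s, (a j + ev)
          ≤ (a i + ev) * (∏ j ∈ s, a j + k * ev * (c0+1) ^ k) := mul_le_mul_right ih _
        _ = a i * ∏ j ∈ s, a j +
            (a i * ((k:ℝ≥0∞) * ev * (c0+1)^k) + (ev * ∏ j ∈ s, a j
              + ev * ((k:ℝ≥0∞) * ev * (c0+1)^k))) := by ring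
        _ ≤ a i * ∏ j ∈ s, a j +
            (c0 * ((k:ℝ≥0∞) * ev * (c0+1)^k) + (ev * (c0+1)^k
              + ev * ((k:ℝ≥0∞) * 1 * (c0+1)^k))) := by
            refine add_le_add_right (add_le_add (mul_le_mul_left (ha i) _)
              (add_le_add (mul_le_mul_right hQ _)
                (mul_le_mul_right (mul_le_mul_left (mul_le_mul_right he _) _) _))) _
        _ = a i * ∏ j ∈ s, a j + ev * (((k:ℝ≥0∞) * (c0+1) + 1) * (c0+1)^k) := by ring
        _ ≤ a i * ∏ j ∈ s, a j + ev * ((((k:ℝ≥0∞)+1) * (c0+1)) * (c0+1)^k) := by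
            refine add_le_add_right (mul_le_mul_right (mul_le_mul_left ?_ _) _) _
            calc (k:ℝ≥0∞) * (c0+1) + 1 ≤ (k:ℝ≥0∞) * (c0+1) + (c0+1) :=
                  add_le_add_right le_add_self _
              _ = ((k:ℝ≥0∞)+1) * (c0+1) := by ring
        _ = a i * ∏ j ∈ s, a j + ((k:ℝ≥0∞)+1) * ev * (c0+1)^(k+1) := by ring
        _ = a i * ∏ j ∈ s, a j + ((k+1 : ℕ):ℝ≥0∞) * ev * (c0+1)^(k+1) := by
            push_cast
            ring

end BlakleyRoyAux

open BlakleyRoyAux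

/-- Blakley–Roy inequality: for a bounded symmetric measurable `W : [0,1]² → ℝ≥0` with
`d = ∫∫ W`, the homomorphism density of the path `Pₙ` with `n` edges satisfies
`t(Pₙ, W) ≥ dⁿ` for every `n ≥ 1`. -/
theorem blakley_roy (W : I → I → ℝ)
    (hmeas : Measurable (Function.uncurry W))
    (hnonneg : ∀ x y, 0 ≤ W x y)
    (hbdd : ∃ C : ℝ, ∀ x y, W x y ≤ C)
    (hsym : ∀ x y, W x y = W y x)
    (d : ℝ) (hd : d = ∫ x : I, ∫ y : I, W x y)
    (n : ℕ) (hn : 1 ≤ n) :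
    (∫ x : Fin (n + 1) → I, ∏ i : Fin n, W (x i.castSucc) (x i.succ)) ≥ d ^ n := by
  obtain ⟨C, hC⟩ := hbdd
  have hC0 : 0 ≤ C := le_trans (hnonneg 0 0) (hC 0 0)
  set Wv : I → I → ℝ≥0∞ := fun x y => ENNReal.ofReal (W x y) with hWv
  have hWvm : Measurable (Function.uncurry Wv) := ENNReal.measurable_ofReal.comp hmeas
  set c0 : ℝ≥0∞ := ENNReal.ofReal C with hc0
  have hc0top : c0 ≠ ⊤ := ENNReal.ofReal_ne_top
  -- measurability of the product integrand
  have hWpair : ∀ (i j : Fin (n+1)), Measurable fun x : Fin (n+1) → I => W (x i) (x j) := by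
    intro i j
    have h : Measurable fun x : Fin (n+1) → I => (x i, x j) :=
      Measurable.prodMk (measurable_pi_apply i) (measurable_pi_apply j)
    exact hmeas.comp h
  have hprodmeas : Measurable fun x : Fin (n+1) → I =>
      ∏ i : Fin n, W (x i.castSucc) (x i.succ) :=
    Finset.measurable_prod _ fun i _ => hWpair i.castSucc i.succ
  set L : ℝ≥0∞ := ∫⁻ x : Fin (n+1) → I, ∏ i : Fin n, Wv (x i.castSucc) (x i.succ) with hL
  have hbound : ∀ x : Fin (n+1) → I,
      (∏ i : Fin n, Wv (x i.castSucc) (x i.succ)) ≤ c0 ^ n := by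
    intro x
    calc (∏ i : Fin n, Wv (x i.castSucc) (x i.succ)) ≤ ∏ _i : Fin n, c0 :=
          Finset.prod_le_prod' fun i _ => ENNReal.ofReal_le_ofReal (hC _ _)
      _ = c0 ^ n := by rw [Finset.prod_const, Finset.card_univ, Fintype.card_fin]
  have hLtop : L ≠ ⊤ := by
    have : L ≤ c0 ^ n := by
      calc L ≤ ∫⁻ _x : Fin (n+1) → I, c0 ^ n := lintegral_mono hbound
        _ = c0 ^ n := by rw [lintegral_const, measure_univ, mul_one]
    exact (this.trans_lt (ENNReal.pow_ne_top hc0top).lt_top).ne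
  -- rewrite the goal through the lower Lebesgue integral
  have hgoal : (∫ x : Fin (n + 1) → I, ∏ i : Fin n, W (x i.castSucc) (x i.succ))
      = L.toReal := by
    rw [integral_eq_lintegral_of_nonneg_ae
      (Filter.Eventually.of_forall fun x => Finset.prod_nonneg fun i _ => hnonneg _ _)
      hprodmeas.aestronglyMeasurable]
    congr 1
    apply lintegral_congr
    intro x
    exact ENNReal.ofReal_prod_of_nonneg fun i _ => hnonneg _ _
  rw [ge_iff_le, hgoal]
  -- basic facts about d
  have hd0 : 0 ≤ d := by
    rw [hd]
    exact integral_nonneg fun x => integral_nonneg fun y => hnonneg x y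
  have hWint : ∀ x : I, Integrable (fun y => W x y) := by
    intro x
    refine (integrable_const C).mono' hmeas.of_uncurry_left.aestronglyMeasurable ?_
    exact Filter.Eventually.of_forall fun y => by
      rw [Real.norm_eq_abs, abs_of_nonneg (hnonneg x y)]; exact hC x y
  have hgm : Measurable fun x : I => ∫ y : I, W x y :=
    hmeas.stronglyMeasurable.integral_prod_right'.measurable
  have hgint : Integrable fun x : I => ∫ y : I, W x y := by
    refine (integrable_const C).mono' hgm.aestronglyMeasurable ?_
    refine Filter.Eventually.of_forall fun x => ?_
    rw [Real.norm_eq_abs, abs_of_nonneg (integral_nonneg fun y => hnonneg x y)]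
    calc (∫ y : I, W x y) ≤ ∫ _y : I, C := by
          refine integral_mono (hWint x) (integrable_const C) fun y => hC x y
      _ = C := by rw [integral_const, probReal_univ, one_smul]
  have hD0 : ENNReal.ofReal d = ∫⁻ x : I, ∫⁻ y : I, Wv x y := by
    rw [hd, MeasureTheory.ofReal_integral_eq_lintegral_ofReal hgint
      (Filter.Eventually.of_forall fun x => integral_nonneg fun y => hnonneg x y)]
    apply lintegral_congr
    intro x
    rw [MeasureTheory.ofReal_integral_eq_lintegral_ofReal (hWint x)
      (Filter.Eventually.of_forall fun y => hnonneg x y)]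
  -- per-epsilon estimate
  have key : ∀ ε : ℝ, 0 < ε → ε ≤ 1 → d^n ≤ L.toReal + ε * (n * (C+1)^n) := by
    intro ε hε hε1
    set ev : ℝ≥0∞ := ENNReal.ofReal ε with hev
    have hev1 : ev ≤ 1 := by
      rw [hev, ← ENNReal.ofReal_one]
      exact ENNReal.ofReal_le_ofReal hε1
    have hevtop : ev ≠ ⊤ := ENNReal.ofReal_ne_top
    set Vε : I → I → ℝ≥0∞ := fun x y => Wv x y + ev with hVε
    have hVεm : Measurable (Function.uncurry Vε) := hWvm.add measurable_const
    have hVεsym : ∀ x y, Vε x y = Vε y x := by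
      intro x y
      simp only [hVε, hWv, hsym x y]
    have he0 : ev ≠ 0 := (ENNReal.ofReal_pos.2 hε).ne'
    have hct : c0 + 1 ≠ ⊤ := by
      exact ENNReal.add_ne_top.2 ⟨hc0top, ENNReal.one_ne_top⟩
    have hle : ∀ x y, ev ≤ Vε x y := fun x y => le_add_self
    have hub : ∀ x y, Vε x y ≤ c0 + 1 := fun x y =>
      add_le_add (ENNReal.ofReal_le_ofReal (hC x y)) hev1
    -- the first moment of Vε
    have h1 : (∫⁻ x : I, F Vε 1 x) = ENNReal.ofReal d + ev := by
      have hx : ∀ x : I, F Vε 1 x = (∫⁻ y : I, Wv x y) + ev := by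
        intro x
        rw [F_one_eq]
        rw [show (∫⁻ y : I, Vε x y) = ∫⁻ y : I, Wv x y + ev from rfl]
        rw [lintegral_add_right _ measurable_const, lintegral_const, measure_univ, mul_one]
      rw [lintegral_congr hx,
        lintegral_add_right _ measurable_const, lintegral_const, measure_univ, mul_one, hD0]
    -- core inequality for Vε
    have h2 := core hVεm hVεsym he0 hct hle hub n hn
    rw [h1] at h2
    -- identification of ∫⁻ F Vε n with the path integral
    have h3 : (∫⁻ x : I, F Vε n x)
        = ∫⁻ x : Fin (n+1) → I, ∏ i : Fin n, Vε (x i.castSucc) (x i.succ) := by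
      have := struct hVεm n (fun _ => 1) measurable_const
      simp only [one_mul] at this
      exact this.symm
    -- epsilon expansion bound
    have h4 : (∫⁻ x : Fin (n+1) → I, ∏ i : Fin n, Vε (x i.castSucc) (x i.succ))
        ≤ L + n * ev * (c0+1)^n := by
      have hpt : ∀ x : Fin (n+1) → I,
          (∏ i : Fin n, Vε (x i.castSucc) (x i.succ))
            ≤ (∏ i : Fin n, Wv (x i.castSucc) (x i.succ)) + n * ev * (c0+1)^n := by
        intro x
        have := prod_eps (Finset.univ : Finset (Fin n))
          (fun i => Wv (x i.castSucc) (x i.succ)) c0 ev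
          (fun i => ENNReal.ofReal_le_ofReal (hC _ _)) hev1
        simpa [Finset.card_univ, Fintype.card_fin] using this
      calc (∫⁻ x : Fin (n+1) → I, ∏ i : Fin n, Vε (x i.castSucc) (x i.succ))
          ≤ ∫⁻ x : Fin (n+1) → I,
              ((∏ i : Fin n, Wv (x i.castSucc) (x i.succ)) + n * ev * (c0+1)^n) :=
            lintegral_mono hpt
        _ = L + n * ev * (c0+1)^n := by
            rw [lintegral_add_right _ measurable_const, lintegral_const, measure_univ, mul_one]
    -- combine in ℝ≥0∞
    have h5 : ENNReal.ofReal (d^n) ≤ L + n * ev * (c0+1)^n := by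
      rw [ENNReal.ofReal_pow hd0]
      calc (ENNReal.ofReal d) ^ n ≤ (ENNReal.ofReal d + ev) ^ n :=
            pow_le_pow_left' le_self_add n
        _ ≤ ∫⁻ x : I, F Vε n x := h2
        _ = _ := h3
        _ ≤ L + n * ev * (c0+1)^n := h4
    -- pass to real numbers
    have hrtop : (n : ℝ≥0∞) * ev * (c0+1)^n ≠ ⊤ := by
      refine ENNReal.mul_ne_top (ENNReal.mul_ne_top (ENNReal.natCast_ne_top n) hevtop) ?_
      exact ENNReal.pow_ne_top hct
    have hfin : L + (n:ℝ≥0∞) * ev * (c0+1)^n ≠ ⊤ := ENNReal.add_ne_top.2 ⟨hLtop, hrtop⟩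
    have h6 : d^n ≤ (L + (n:ℝ≥0∞) * ev * (c0+1)^n).toReal := by
      rw [show d^n = (ENNReal.ofReal (d^n)).toReal from
        (ENNReal.toReal_ofReal (pow_nonneg hd0 n)).symm]
      exact ENNReal.toReal_mono hfin h5
    rw [ENNReal.toReal_add hLtop hrtop] at h6
    have h7 : ((n:ℝ≥0∞) * ev * (c0+1)^n).toReal = n * ε * (C+1)^n := by
      rw [ENNReal.toReal_mul, ENNReal.toReal_mul, ENNReal.toReal_pow,
        ENNReal.toReal_natCast, ENNReal.toReal_ofReal hε.le, ENNReal.toReal_add hc0top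
          ENNReal.one_ne_top, ENNReal.toReal_one, ENNReal.toReal_ofReal hC0]
    rw [h7] at h6
    calc d^n ≤ L.toReal + n * ε * (C+1)^n := h6
      _ = L.toReal + ε * (n * (C+1)^n) := by ring
  -- take epsilon to zero
  have hM : (0:ℝ) ≤ n * (C+1)^n := by positivity
  refine le_of_forall_pos_le_add ?_
  intro δ hδ
  set M : ℝ := n * (C+1)^n with hMdef
  set ε : ℝ := min 1 (δ / (M+1)) with hε
  have hεpos : 0 < ε := lt_min one_pos (by positivity)
  have h8 := key ε hεpos (min_le_left _ _)
  have h9 : ε * M ≤ δ := by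
    calc ε * M ≤ (δ / (M+1)) * M :=
          mul_le_mul_of_nonneg_right (min_le_right _ _) hM
      _ ≤ δ := by
          rw [div_mul_eq_mul_div, div_le_iff₀ (by positivity : (0:ℝ) < M+1)]
          nlinarith
  linarith
end

section
/- Let T be a tree on vertex set {x₁,…,x_n} with vertex degrees r₁,…,r_n, W : [0,1]² → ℝ>0 bounded symmetric measurable, d = ∫∫ W, d(x) = ∫ W(x,y) dy. Define f_T = d^{-1} · ∏_{i=1}^n d(x_i)^{1−r_i} · ∏_{(x_i,x_j)∈E(T)} W(x_i,x_j). Then for every i, the marginal ∫ f_T ∏_{j≠i} dx_j equals d(x_i)/d, and consequently ∫ f_T = 1. -/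
open MeasureTheory Real unitInterval Function

lemma aux_pull {n : ℕ} (s : Finset (Fin n)) (f c : (Fin n → I) → ENNReal)
    (hf : Measurable f) (hc : ∀ x y : Fin n → I, (∀ k, k ∉ s → x k = y k) → c x = c y)
    (x : Fin n → I) :
    (∫⋯∫⁻_s, (fun z => c z * f z)) x = c x * (∫⋯∫⁻_s, f) x := by
  classical
  have h1 : ∀ y : (k : s) → I, c (Function.updateFinset x s y) = c x := by
    intro y
    exact hc _ _ fun k hk => by simp [Function.updateFinset, hk]
  simp only [lmarginal]
  calc ∫⁻ y : (k : s) → I, (fun z => c z * f z) (updateFinset x s y)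
        ∂(Measure.pi fun _ => volume)
      = ∫⁻ y : (k : s) → I, c x * f (updateFinset x s y) ∂(Measure.pi fun _ => volume) := by
        simp only []
        exact lintegral_congr fun y => by rw [h1 y]
    _ = c x * ∫⁻ y : (k : s) → I, f (updateFinset x s y) ∂(Measure.pi fun _ => volume) :=
        lintegral_const_mul _ (hf.comp measurable_updateFinset)

lemma aux_update {n : ℕ} (s : Finset (Fin n)) (i : Fin n) (hi : i ∉ s)
    (f : (Fin n → I) → ENNReal) (xi : I) (x : Fin n → I) :
    (∫⋯∫⁻_s, (fun z => f (Function.update z i xi))) x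
      = (∫⋯∫⁻_s, f) (Function.update x i xi) := by
  classical
  simp only [lmarginal]
  congr 1
  funext y
  congr 1
  funext k
  by_cases hk : k ∈ s
  · have hki : k ≠ i := fun h => hi (h ▸ hk)
    simp [Function.updateFinset, hk, Function.update_of_ne hki]
  · by_cases hki : k = i
    · subst hki; simp [Function.updateFinset, hk]
    · simp [Function.updateFinset, hk, Function.update_of_ne hki]

lemma treeInt {n : ℕ} (i : Fin n) (p : Fin n → Fin n) (ρ : Fin n → ℕ)
    (hρ : ∀ j, j ≠ i → ρ (p j) < ρ j)
    (K : I → I → ENNReal) (hK : Measurable (Function.uncurry K))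
    (hK1 : ∀ u, ∫⁻ v, K u v = 1)
    (s : Finset (Fin n)) :
    i ∉ s → (∀ k, k ≠ i → p k ∈ s → k ∈ s) → ∀ x : Fin n → I,
      (∫⋯∫⁻_s, (fun z => ∏ j ∈ s, K (z (p j)) (z j))) x = 1 := by
  classical
  induction s using Finset.strongInduction with
  | _ s IH =>
    intro his hcl x
    rcases s.eq_empty_or_nonempty with rfl | hne
    · simp
    obtain ⟨j, hjs, hjmin⟩ := Finset.exists_min_image s ρ hne
    have hji : j ≠ i := fun h => his (h ▸ hjs)
    have hpj : p j ∉ s := fun h => absurd (hjmin _ h) (not_le.mpr (hρ j hji))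
    have hpjj : p j ≠ j := fun h => absurd (hρ j hji) (by rw [h]; exact lt_irrefl _)
    set s' := s.erase j with hs'
    have hss : s = insert j s' := (Finset.insert_erase hjs).symm
    have hsub : s' ⊆ s := Finset.erase_subset _ _
    have hmeasfac : ∀ m : Fin n, Measurable fun z : Fin n → I => K (z (p m)) (z m) := by
      intro m
      have h2 : Measurable fun z : Fin n → I => (z (p m), z m) :=
        (measurable_pi_apply (p m)).prodMk (measurable_pi_apply m)
      exact hK.comp h2
    have hF : Measurable fun z : Fin n → I => ∏ m ∈ s, K (z (p m)) (z m) :=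
      Finset.measurable_prod _ fun m _ => hmeasfac m
    have hG : Measurable fun z : Fin n → I => ∏ m ∈ s', K (z (p m)) (z m) :=
      Finset.measurable_prod _ fun m _ => hmeasfac m
    have hjs' : j ∉ s' := Finset.notMem_erase _ _
    have key : ∀ y : Fin n → I,
        (∫⋯∫⁻_s', (fun z => ∏ m ∈ s, K (z (p m)) (z m))) y = K (y (p j)) (y j) := by
      intro y
      have hsplit : (fun z : Fin n → I => ∏ m ∈ s, K (z (p m)) (z m))
          = fun z => (K (z (p j)) (z j)) * ∏ m ∈ s', K (z (p m)) (z m) := by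
        funext z
        rw [hss, Finset.prod_insert hjs']
      rw [hsplit, aux_pull s' _ _ hG]
      · have h1 : (∫⋯∫⁻_s', (fun z : Fin n → I => ∏ m ∈ s', K (z (p m)) (z m))) y = 1 := by
          refine IH s' (Finset.erase_ssubset hjs) (fun h => his (hsub h)) ?_ y
          intro k hk hpk
          have hks : k ∈ s := hcl k hk (hsub hpk)
          have hkj : k ≠ j := by
            rintro rfl
            exact hpj (hsub hpk)
          exact Finset.mem_erase.mpr ⟨hkj, hks⟩
        rw [h1, mul_one]
      · intro a b hab
        rw [hab (p j) (fun h => hpj (hsub h)), hab j hjs']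
    rw [lmarginal_erase _ hF hjs]
    have : ∀ t : I, (∫⋯∫⁻_s', (fun z => ∏ m ∈ s, K (z (p m)) (z m)))
        (Function.update x j t) = K (x (p j)) t := by
      intro t
      rw [key]
      rw [Function.update_of_ne hpjj, Function.update_self]
    simp_rw [← hs', this]
    · exact hK1 _

open SimpleGraph in
lemma tree_parent {n : ℕ} (T : SimpleGraph (Fin n)) (htree : T.IsTree) (i : Fin n) :
    ∃ (p : Fin n → Fin n) (ρ : Fin n → ℕ),
      (∀ j, j ≠ i → ρ (p j) < ρ j) ∧
      (∀ j, j ≠ i → T.Adj j (p j)) ∧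
      (∀ a b, T.Adj a b → p a = b ∨ p b = a) ∧
      (p i = i) := by
  classical
  have h := fun v => htree.existsUnique_path v i
  choose P hP1 hP2 using fun v => (h v)
  refine ⟨fun j => (P j).getVert 1, fun j => (P j).length, ?_, ?_, ?_, ?_⟩
  case _ =>
    -- ρ decreasing
    intro j hji
    show (P ((P j).getVert 1)).length < (P j).length
    have hnn : ¬ (P j).Nil := Walk.not_nil_of_ne hji
    obtain ⟨v, hadj, q, hq⟩ := Walk.not_nil_iff.mp hnn
    have hv : (P j).getVert 1 = v := by rw [hq]; exact (Walk.getVert_cons_succ (n := 0) q hadj).trans (Walk.getVert_zero _)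
    have hqp : q.IsPath := by
      have := hP1 j; rw [hq] at this; exact this.of_cons
    have hPv : q = P v := hP2 v q hqp
    rw [hv, ← hPv, hq]
    simp [Walk.length_cons]
  case _ =>
    intro j hji
    show T.Adj j ((P j).getVert 1)
    have hnn : ¬ (P j).Nil := Walk.not_nil_of_ne hji
    obtain ⟨v, hadj, q, hq⟩ := Walk.not_nil_iff.mp hnn
    have hv : (P j).getVert 1 = v := by rw [hq]; exact (Walk.getVert_cons_succ (n := 0) q hadj).trans (Walk.getVert_zero _)
    rw [hv]; exact hadj
  case _ =>
    intro a b hab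
    show (P a).getVert 1 = b ∨ (P b).getVert 1 = a
    by_cases hbi : b = i
    · subst hbi
      left
      have hpath : (Walk.cons hab Walk.nil).IsPath := by
        rw [Walk.cons_isPath_iff]
        exact ⟨Walk.IsPath.nil, by simp [hab.ne]⟩
      have := hP2 a _ hpath
      rw [← this]
      simp [Walk.getVert_cons_succ]
    by_cases hai : a = i
    · subst hai
      right
      have hpath : (Walk.cons hab.symm Walk.nil).IsPath := by
        rw [Walk.cons_isPath_iff]
        exact ⟨Walk.IsPath.nil, by simp [hab.ne']⟩
      have := hP2 b _ hpath
      rw [← this]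
      simp [Walk.getVert_cons_succ]
    by_cases hmem : a ∈ (P b).support
    · right
      have hdp : ((P b).dropUntil a hmem).IsPath := (hP1 b).dropUntil hmem
      have hbsupp : b ∉ ((P b).dropUntil a hmem).support := by
        intro hb
        have hnd := (hP1 b).support_nodup
        have hspec := (P b).take_spec hmem
        rw [← hspec, Walk.support_append] at hnd
        have hdisj := List.disjoint_of_nodup_append hnd
        have hb' : b ∈ ((P b).dropUntil a hmem).support.tail := by
          rw [Walk.support_eq_cons ((P b).dropUntil a hmem)] at hb
          rcases List.mem_cons.mp hb with h' | h'
          · exact absurd h'.symm hab.ne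
          · exact h'
        exact hdisj (Walk.start_mem_support _) hb'
      have hpath : (Walk.cons hab.symm ((P b).dropUntil a hmem)).IsPath :=
        hdp.cons hbsupp
      have := hP2 b _ hpath
      rw [← this]
      exact (Walk.getVert_cons_succ (n := 0) _ _).trans (Walk.getVert_zero _)
    · left
      have hpath : (Walk.cons hab (P b)).IsPath := by
        rw [Walk.cons_isPath_iff]
        exact ⟨hP1 b, hmem⟩
      have := hP2 a _ hpath
      rw [← this]
      exact (Walk.getVert_cons_succ (n := 0) _ _).trans (Walk.getVert_zero _)
  case _ =>
    show (P i).getVert 1 = i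
    have : Walk.nil = P i := hP2 i Walk.nil Walk.IsPath.nil
    rw [← this]
    rfl

open scoped Classical in
/-- The canonical tree weight of the logarithmic calculus: for a tree `T` on `{x₁,…,x_n}`
with degrees `rᵢ`, and `W : [0,1]² → ℝ` bounded, symmetric, measurable and bounded below by
a positive constant, with `d = ∫∫ W` and `d(x) = ∫ W(x,y) dy`, the weight
`f_T = d⁻¹ ∏ᵢ d(xᵢ)^{1 - rᵢ} ∏_{(xᵢ,xⱼ) ∈ E(T)} W(xᵢ,xⱼ)` has all its one-variable
marginals equal to `d(xᵢ)/d`, and consequently `∫ f_T = 1`. -/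
theorem tree_weight (n : ℕ) (hn : 1 ≤ n) (T : SimpleGraph (Fin n)) (htree : T.IsTree)
    (W : I → I → ℝ)
    (hmeas : Measurable (Function.uncurry W))
    (hpos : ∃ c : ℝ, 0 < c ∧ ∀ x y, c ≤ W x y)
    (hbdd : ∃ C : ℝ, ∀ x y, W x y ≤ C)
    (hsym : ∀ x y, W x y = W y x)
    (d : ℝ) (hd : d = ∫ x : I, ∫ y : I, W x y)
    (deg : I → ℝ) (hdeg : ∀ x, deg x = ∫ y : I, W x y)
    (fT : (Fin n → I) → ℝ)
    (hfT : ∀ x, fT x = d⁻¹ * (∏ i : Fin n, deg (x i) ^ ((1 : ℤ) - (T.degree i : ℤ))) *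
      ∏ e ∈ T.edgeFinset,
        Sym2.lift ⟨fun a b => W (x a) (x b), fun a b => hsym (x a) (x b)⟩ e) :
    (∀ (i : Fin n) (xi : I),
        (∫ x : Fin n → I, fT (Function.update x i xi)) = deg xi / d) ∧
      (∫ x : Fin n → I, fT x) = 1 := by
  obtain ⟨c, hc0, hcW⟩ := hpos
  obtain ⟨C, hCW⟩ := hbdd
  have hWpos : ∀ x y, 0 < W x y := fun x y => lt_of_lt_of_le hc0 (hcW x y)
  have hWm : ∀ u, Measurable (W u) := by
    intro u
    have h2 : Measurable fun y : I => (u, y) := measurable_const.prodMk measurable_id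
    have h3 : Measurable (Function.uncurry W ∘ fun y : I => (u, y)) := hmeas.comp h2
    exact h3
  have hWint : ∀ u, Integrable (W u) := by
    intro u
    refine ⟨(hWm u).aestronglyMeasurable, HasFiniteIntegral.of_bounded (C := C) ?_⟩
    refine ae_of_all _ fun y => ?_
    rw [Real.norm_eq_abs, abs_le]
    exact ⟨by linarith [hcW u y, hCW u y], hCW u y⟩
  have hconst : ∀ r : ℝ, (∫ _ : I, r) = r := by
    intro r; simp
  have hdeg_ge : ∀ u, c ≤ deg u := by
    intro u
    rw [hdeg u, ← hconst c]
    exact integral_mono (integrable_const c) (hWint u) fun y => hcW u y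
  have hdeg_le : ∀ u, deg u ≤ C := by
    intro u
    rw [hdeg u, ← hconst C]
    exact integral_mono (hWint u) (integrable_const C) fun y => hCW u y
  have hdeg0 : ∀ u, 0 < deg u := fun u => lt_of_lt_of_le hc0 (hdeg_ge u)
  have hdegm : Measurable deg := by
    have h1 : StronglyMeasurable (Function.uncurry W) := hmeas.stronglyMeasurable
    have h2 : StronglyMeasurable fun x : I => ∫ y : I, Function.uncurry W (x, y) :=
      h1.integral_prod_right'
    have h3 : deg = fun x => ∫ y, Function.uncurry W (x, y) := funext hdeg
    rw [h3]
    exact h2.measurable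
  have hdegint : Integrable deg := by
    refine ⟨hdegm.aestronglyMeasurable, HasFiniteIntegral.of_bounded (C := C) ?_⟩
    refine ae_of_all _ fun u => ?_
    rw [Real.norm_eq_abs, abs_le]
    exact ⟨by linarith [hdeg_ge u, hdeg_le u], hdeg_le u⟩
  have hd_eq : (∫ t : I, deg t) = d := by
    rw [hd]
    exact integral_congr_ae (Filter.Eventually.of_forall fun x => hdeg x)
  have hd_ge : c ≤ d := by
    rw [← hd_eq, ← hconst c]
    exact integral_mono (integrable_const c) hdegint hdeg_ge
  have hd0 : 0 < d := lt_of_lt_of_le hc0 hd_ge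
  have main : ∀ i : Fin n,
      (∀ xi : I, (∫ x : Fin n → I, fT (Function.update x i xi)) = deg xi / d) ∧
        (∫ x : Fin n → I, fT x) = 1 := by
    intro i
    obtain ⟨p, ρ, hρ, hadjp, hdich, hpi⟩ := tree_parent T htree i
    set E := Finset.univ.erase i with hE
    have hiE : i ∉ E := Finset.notMem_erase _ _
    have hmemE : ∀ k, k ∈ E ↔ k ≠ i := by
      intro k; simp [hE]
    -- counting
    have hCv : ∀ v, v ≠ i →
        E.filter (fun j => p j = v) = T.neighborFinset v \ {p v} := by
      intro v hv
      ext j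
      simp only [Finset.mem_filter, Finset.mem_sdiff, SimpleGraph.mem_neighborFinset,
        Finset.mem_singleton, hmemE]
      constructor
      · rintro ⟨hj, hpj⟩
        have h1 := hρ j hj
        rw [hpj] at h1
        refine ⟨by rw [← hpj]; exact (hadjp j hj).symm, ?_⟩
        rintro rfl
        have h2 := hρ v hv
        omega
      · rintro ⟨hadj, hne⟩
        have hji : j ≠ i := by
          rintro rfl
          rcases hdich v j hadj with h | h
          · exact hne h.symm
          · rw [hpi] at h; exact (T.irrefl (h ▸ hadj))
        refine ⟨hji, ?_⟩
        rcases hdich j v hadj.symm with h | h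
        · exact h
        · exact absurd h.symm hne
    have hCi : E.filter (fun j => p j = i) = T.neighborFinset i := by
      ext j
      simp only [Finset.mem_filter, SimpleGraph.mem_neighborFinset, hmemE]
      constructor
      · rintro ⟨hj, hpj⟩
        rw [← hpj]; exact (hadjp j hj).symm
      · intro hadj
        have hji : j ≠ i := fun h => T.irrefl (h ▸ hadj)
        refine ⟨hji, ?_⟩
        rcases hdich j i hadj.symm with h | h
        · exact h
        · rw [hpi] at h; exact absurd h.symm hji
    have hcardCi : (E.filter (fun j => p j = i)).card = T.degree i := by
      rw [hCi]; rfl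
    have hcardCv : ∀ v, v ≠ i →
        (E.filter (fun j => p j = v)).card + 1 = T.degree v := by
      intro v hv
      rw [hCv v hv]
      have hmem : {p v} ⊆ T.neighborFinset v := by
        simp only [Finset.singleton_subset_iff, SimpleGraph.mem_neighborFinset]
        exact hadjp v hv
      have := Finset.card_sdiff_add_card_eq_card hmem
      simpa using this
    -- edge bijection
    have hmapsto : ∀ j ∈ E, s(j, p j) ∈ T.edgeFinset := by
      intro j hj
      rw [SimpleGraph.mem_edgeFinset, SimpleGraph.mem_edgeSet]
      exact hadjp j ((hmemE j).mp hj)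
    have hinj : ∀ a ∈ E, ∀ b ∈ E, s(a, p a) = s(b, p b) → a = b := by
      intro a ha b hb heq
      rcases Sym2.eq_iff.mp heq with ⟨h1, _⟩ | ⟨h1, h2⟩
      · exact h1
      · have ha' := hρ a ((hmemE a).mp ha)
        have hb' := hρ b ((hmemE b).mp hb)
        rw [h2] at ha'
        rw [← h1] at hb'
        omega
    have hcard1 : T.edgeFinset.card ≤ E.card := by
      have h1 := htree.card_edgeFinset
      have h2 : E.card = n - 1 := by
        rw [hE, Finset.card_erase_of_mem (Finset.mem_univ i), Finset.card_univ,
          Fintype.card_fin]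
      have h3 : Fintype.card (Fin n) = n := Fintype.card_fin n
      omega
    have hedge : ∀ x : Fin n → I,
        (∏ e ∈ T.edgeFinset,
          Sym2.lift ⟨fun a b => W (x a) (x b), fun a b => hsym (x a) (x b)⟩ e)
        = ∏ j ∈ E, W (x (p j)) (x j) := by
      intro x
      refine (Finset.prod_bij (fun j _ => s(j, p j)) hmapsto (fun a ha b hb => hinj a ha b hb) ?_ ?_).symm
      · intro e he
        obtain ⟨a, ha, hae⟩ :=
          Finset.surj_on_of_inj_on_of_card_le (fun j _ => s(j, p j)) hmapsto (fun a b ha hb => hinj a ha b hb) hcard1 e he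
        exact ⟨a, ha, hae.symm⟩
      · intro j hj
        rw [Sym2.lift_mk]
        exact hsym _ _
    -- vertex product
    have hvert : ∀ x : Fin n → I,
        (∏ v : Fin n, deg (x v) ^ ((1 : ℤ) - (T.degree v : ℤ)))
          = deg (x i) * ∏ j ∈ E, (deg (x (p j)))⁻¹ := by
      intro x
      have hfib : (∏ j ∈ E, (deg (x (p j)))⁻¹)
          = ∏ v : Fin n, ((deg (x v))⁻¹) ^ (E.filter (fun j => p j = v)).card := by
        rw [← Finset.prod_fiberwise_of_maps_to (fun j _ => Finset.mem_univ (p j))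
          (fun j => (deg (x (p j)))⁻¹)]
        refine Finset.prod_congr rfl fun v _ => ?_
        rw [← Finset.prod_const]
        refine Finset.prod_congr rfl fun j hj => ?_
        rw [(Finset.mem_filter.mp hj).2]
      have hprod_ite : (∏ v : Fin n, if v = i then deg (x v) else 1) = deg (x i) := by
        rw [Finset.prod_ite_eq' Finset.univ i (fun v => deg (x v))]
        simp
      rw [hfib, ← hprod_ite, ← Finset.prod_mul_distrib]
      refine Finset.prod_congr rfl fun v _ => ?_
      by_cases hv : v = i
      · subst hv
        rw [if_pos rfl, hcardCi]
        have hne := (hdeg0 (x v)).ne'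
        rw [sub_eq_add_neg, zpow_add₀ hne, zpow_one, zpow_neg, zpow_natCast, inv_pow]
      · rw [if_neg hv, one_mul]
        have hne := (hdeg0 (x v)).ne'
        have hcv := hcardCv v hv
        have hz : (1 : ℤ) - (T.degree v : ℤ)
            = -(((E.filter (fun j => p j = v)).card : ℤ)) := by omega
        rw [hz, zpow_neg, zpow_natCast, inv_pow]
    have hkey : ∀ x : Fin n → I, fT x
        = (deg (x i) / d) * ∏ j ∈ E, (W (x (p j)) (x j) / deg (x (p j))) := by
      intro x
      rw [hfT x, hedge x, hvert x, Finset.prod_div_distrib, Finset.prod_inv_distrib]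
      rw [div_eq_mul_inv, div_eq_mul_inv]
      ring
    -- nonnegativity and measurability
    have hfT0 : ∀ z, 0 ≤ fT z := by
      intro z
      rw [hkey z]
      refine mul_nonneg (div_nonneg (hdeg0 _).le hd0.le) (Finset.prod_nonneg fun j _ => ?_)
      exact div_nonneg (hWpos _ _).le (hdeg0 _).le
    have hfTm : Measurable fT := by
      have h0 : fT = fun x => (deg (x i) / d) *
          ∏ j ∈ E, (W (x (p j)) (x j) / deg (x (p j))) := funext hkey
      rw [h0]
      refine Measurable.mul ((hdegm.comp (measurable_pi_apply i)).div_const d) ?_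
      refine Finset.measurable_prod _ fun j _ => ?_
      have h2 : Measurable fun x : Fin n → I => (x (p j), x j) :=
        (measurable_pi_apply (p j)).prodMk (measurable_pi_apply j)
      have h1 : Measurable (Function.uncurry W ∘ fun x : Fin n → I => (x (p j), x j)) :=
        hmeas.comp h2
      exact h1.div (hdegm.comp (measurable_pi_apply (p j)))
    -- the ENNReal kernel
    set K : I → I → ENNReal := fun u v => ENNReal.ofReal (W u v / deg u) with hK
    have hKm : Measurable (Function.uncurry K) := by
      have h1 : Function.uncurry K
          = fun q : I × I => ENNReal.ofReal (Function.uncurry W q / deg q.1) := rfl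
      rw [h1]
      exact ENNReal.measurable_ofReal.comp (hmeas.div (hdegm.comp measurable_fst))
    have hK1 : ∀ u, (∫⁻ v : I, K u v) = 1 := by
      intro u
      have hint : Integrable (fun v => W u v / deg u) := (hWint u).div_const _
      have hnn : 0 ≤ᵐ[volume] fun v : I => W u v / deg u :=
        Filter.Eventually.of_forall fun v => div_nonneg (hWpos _ _).le (hdeg0 _).le
      have h2 := MeasureTheory.ofReal_integral_eq_lintegral_ofReal hint hnn
      rw [hK]
      simp only []
      rw [← h2, integral_div, ← hdeg u, div_self (hdeg0 u).ne', ENNReal.ofReal_one]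
    have hΦm : Measurable fun z : Fin n → I => ∏ j ∈ E, K (z (p j)) (z j) := by
      refine Finset.measurable_prod _ fun j _ => ?_
      have h2 : Measurable fun z : Fin n → I => (z (p j), z j) :=
        (measurable_pi_apply (p j)).prodMk (measurable_pi_apply j)
      exact hKm.comp h2
    have htreeInt : ∀ y : Fin n → I,
        (∫⋯∫⁻_E, (fun z => ∏ j ∈ E, K (z (p j)) (z j))) y = 1 := by
      intro y
      exact treeInt i p ρ hρ K hKm hK1 E hiE (fun k hk _ => (hmemE k).mpr hk) y
    have hFsplit : (fun z => ENNReal.ofReal (fT z))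
        = fun z => ENNReal.ofReal (deg (z i) / d) * ∏ j ∈ E, K (z (p j)) (z j) := by
      funext z
      rw [hkey z, ENNReal.ofReal_mul (div_nonneg (hdeg0 _).le hd0.le),
        ENNReal.ofReal_prod_of_nonneg
          (fun j _ => div_nonneg (hWpos _ _).le (hdeg0 _).le)]
    have hmarg : ∀ y : Fin n → I,
        (∫⋯∫⁻_E, (fun z => ENNReal.ofReal (fT z))) y
          = ENNReal.ofReal (deg (y i) / d) := by
      intro y
      rw [hFsplit]
      rw [aux_pull E _ (fun z => ENNReal.ofReal (deg (z i) / d)) hΦm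
        (fun a b hab => by simp only [hab i hiE]) y]
      rw [htreeInt y, mul_one]
    have hFm : Measurable fun z : Fin n → I => ENNReal.ofReal (fT z) :=
      ENNReal.measurable_ofReal.comp hfTm
    have hpieq : (volume : Measure (Fin n → I)) = Measure.pi fun _ => volume := rfl
    have huniv : (Finset.univ : Finset (Fin n)) = insert i E :=
      (Finset.insert_erase (Finset.mem_univ i)).symm
    constructor
    · intro xi
      have hupd : Measurable fun x : Fin n → I => Function.update x i xi := by
        rw [measurable_pi_iff]
        intro k
        by_cases hk : k = i
        · subst hk
          simp only [Function.update_self]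
          exact measurable_const
        · simp only [Function.update_of_ne hk]
          exact measurable_pi_apply k
      have hcomp : Measurable fun x : Fin n → I => fT (Function.update x i xi) :=
        hfTm.comp hupd
      rw [MeasureTheory.integral_eq_lintegral_of_nonneg_ae
        (Filter.Eventually.of_forall fun x => hfT0 _) hcomp.aestronglyMeasurable]
      have hlin : (∫⁻ x : Fin n → I, ENNReal.ofReal (fT (Function.update x i xi)))
          = ENNReal.ofReal (deg xi / d) := by
        have hcompF : Measurable fun x : Fin n → I =>
            ENNReal.ofReal (fT (Function.update x i xi)) := hFm.comp hupd
        rw [hpieq, lintegral_eq_lmarginal_univ (fun _ => (0 : I)), huniv,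
          lmarginal_insert _ hcompF hiE]
        have hw : ∀ w : Fin n → I,
            (∫⋯∫⁻_E, (fun x => ENNReal.ofReal (fT (Function.update x i xi)))) w
              = ENNReal.ofReal (deg xi / d) := by
          intro w
          rw [aux_update E i hiE (fun z => ENNReal.ofReal (fT z)) xi w, hmarg,
            Function.update_self]
        simp_rw [hw]
        rw [lintegral_const, measure_univ, mul_one]
      rw [hlin, ENNReal.toReal_ofReal (div_nonneg (hdeg0 _).le hd0.le)]
    · rw [MeasureTheory.integral_eq_lintegral_of_nonneg_ae
        (Filter.Eventually.of_forall fun x => hfT0 x) hfTm.aestronglyMeasurable]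
      have hlin : (∫⁻ x : Fin n → I, ENNReal.ofReal (fT x)) = 1 := by
        rw [hpieq, lintegral_eq_lmarginal_univ (fun _ => (0 : I)), huniv,
          lmarginal_insert _ hFm hiE]
        have hw : ∀ t : I,
            (∫⋯∫⁻_E, (fun z => ENNReal.ofReal (fT z)))
              (Function.update (fun _ => (0 : I)) i t)
              = ENNReal.ofReal (deg t / d) := by
          intro t
          rw [hmarg, Function.update_self]
        simp_rw [hw]
        have hint : Integrable (fun t : I => deg t / d) := hdegint.div_const d
        have hnn : 0 ≤ᵐ[volume] fun t : I => deg t / d :=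
          Filter.Eventually.of_forall fun t => div_nonneg (hdeg0 _).le hd0.le
        rw [← MeasureTheory.ofReal_integral_eq_lintegral_ofReal hint hnn,
          integral_div, hd_eq, div_self hd0.ne', ENNReal.ofReal_one]
      rw [hlin, ENNReal.toReal_one]
  exact ⟨fun i xi => (main i).1 xi, (main ⟨0, hn⟩).2⟩
end

section
/- Let H be a bipartite graph containing an edge (x₁,x₂), labeled by {1,2}, and suppose this edge is smooth in H, i.e., E(W(x₁,x₂) d^{-1} ln t_{{x₁,x₂}}(H*, W)) ≥ |E(H*)| ln d for all strictly positive bounded symmetric W, where H* = H minus the edge (x₁,x₂). Then H is Sidorenko: t(H, W) ≥ d^{|E(H)|}. -/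
open MeasureTheory Real unitInterval
open scoped ENNReal NNReal

noncomputable section
open scoped Classical

/-- The product of `W` over the edges of a graph, evaluated at a vertex-assignment `x`;
`W` is assumed symmetric via `hsym`. -/
def edgeProd {k : ℕ} (G : SimpleGraph (Fin k)) (W : I → I → ℝ)
    (hsym : ∀ x y, W x y = W y x) (x : Fin k → I) : ℝ :=
  ∏ e ∈ G.edgeFinset,
    Sym2.lift ⟨fun a b => W (x a) (x b), fun a b => hsym (x a) (x b)⟩ e

/-- `d = ∫∫ W`, the edge density of the kernel `W`. -/
def kernelDensity (W : I → I → ℝ) : ℝ := ∫ x : I, ∫ y : I, W x y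

/-- The degree function `d(x) = ∫ W(x,y) dy`. -/
def kernelDeg (W : I → I → ℝ) (x : I) : ℝ := ∫ y : I, W x y

/-- The canonical tree weight `f_T = d⁻¹ ∏ᵢ d(xᵢ)^{1-rᵢ} ∏_{(xᵢ,xⱼ)∈E(T)} W(xᵢ,xⱼ)`. -/
def treeWeight {n : ℕ} (T : SimpleGraph (Fin n)) (W : I → I → ℝ)
    (hsym : ∀ x y, W x y = W y x) (x : Fin n → I) : ℝ :=
  (kernelDensity W)⁻¹ * (∏ i : Fin n, kernelDeg W (x i) ^ ((1 : ℤ) - (T.degree i : ℤ))) *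
    edgeProd T W hsym x

/-- Extend an assignment `y` of the first `n` (labeled) vertices by `x` on the rest. -/
def extAssign {m n : ℕ} (hnm : n ≤ m) (y : Fin n → I) (x : Fin m → I) : Fin m → I :=
  fun i => if h : (i : ℕ) < n then y ⟨i, h⟩ else x i

/-- The restricted density `t_S(G, W)` of a graph `G` on `Fin m`, with the first `n`
vertices (the labeled set `S`) fixed to `y`. -/
def restrictedDensity {m n : ℕ} (hnm : n ≤ m) (G : SimpleGraph (Fin m)) (W : I → I → ℝ)
    (hsym : ∀ x y, W x y = W y x) (y : Fin n → I) : ℝ :=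
  ∫ x : Fin m → I, edgeProd G W hsym (extAssign hnm y x)

/-- `H*`: the graph `H` with the edges of the tree `T` (spanned on the first `n` vertices)
deleted. -/
def deleteTreeEdges {m n : ℕ} (hnm : n ≤ m) (H : SimpleGraph (Fin m))
    (T : SimpleGraph (Fin n)) : SimpleGraph (Fin m) :=
  H.deleteEdges (Sym2.map (Fin.castLE hnm) '' T.edgeSet)

/-- The tree `T`, spanned on the first `n` (labeled) vertices of `H`, is *smooth* in `H`:
for every strictly positive bounded symmetric measurable `W`,
`E(f_T · ln t_S(H*, W)) ≥ |E(H*)| ln d`. -/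
def IsSmooth {m n : ℕ} (hnm : n ≤ m) (H : SimpleGraph (Fin m))
    (T : SimpleGraph (Fin n)) : Prop :=
  ∀ (W : I → I → ℝ), Measurable (Function.uncurry W) →
    (∃ c : ℝ, 0 < c ∧ ∀ x y, c ≤ W x y) → (∃ C : ℝ, ∀ x y, W x y ≤ C) →
    ∀ (hsym : ∀ x y, W x y = W y x),
    (∫ y : Fin n → I, treeWeight T W hsym y *
        Real.log (restrictedDensity hnm (deleteTreeEdges hnm H T) W hsym y))
      ≥ ((deleteTreeEdges hnm H T).edgeFinset.card : ℝ) * Real.log (kernelDensity W)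


/-! ### Auxiliary lemmas -/

lemma sym2_lift_mem_Icc {k : ℕ} {W : I → I → ℝ} {c C : ℝ}
    (hW : ∀ x y, c ≤ W x y) (hC : ∀ x y, W x y ≤ C)
    (hsym : ∀ x y, W x y = W y x) (x : Fin k → I) (e : Sym2 (Fin k)) :
    Sym2.lift ⟨fun a b => W (x a) (x b), fun a b => hsym (x a) (x b)⟩ e ∈ Set.Icc c C := by
  induction e using Sym2.ind with
  | _ i j => simp only [Sym2.lift_mk]; exact ⟨hW _ _, hC _ _⟩

lemma measurable_edgeProd {k : ℕ} (G : SimpleGraph (Fin k)) (W : I → I → ℝ)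
    (hmeas : Measurable (Function.uncurry W)) (hsym : ∀ x y, W x y = W y x) :
    Measurable (edgeProd G W hsym) := by
  unfold edgeProd
  refine Finset.measurable_prod _ (fun e he => ?_)
  clear he
  induction e using Sym2.ind with
  | _ i j =>
    simp only [Sym2.lift_mk]
    have h1 : Measurable fun x : Fin k → I => (x i, x j) :=
      (measurable_pi_apply i).prodMk (measurable_pi_apply j)
    exact hmeas.comp h1

lemma edgeProd_mem_Icc {k : ℕ} (G : SimpleGraph (Fin k)) (W : I → I → ℝ) {c C : ℝ}
    (hc : 0 ≤ c) (hW : ∀ x y, c ≤ W x y) (hC : ∀ x y, W x y ≤ C)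
    (hsym : ∀ x y, W x y = W y x) (x : Fin k → I) :
    edgeProd G W hsym x ∈ Set.Icc (c ^ G.edgeFinset.card) (C ^ G.edgeFinset.card) := by
  unfold edgeProd
  constructor
  · rw [← Finset.prod_const]
    exact Finset.prod_le_prod (fun e _ => hc) (fun e _ => (sym2_lift_mem_Icc hW hC hsym x e).1)
  · rw [← Finset.prod_const]
    exact Finset.prod_le_prod (fun e _ => le_trans hc (sym2_lift_mem_Icc hW hC hsym x e).1)
      (fun e _ => (sym2_lift_mem_Icc hW hC hsym x e).2)

lemma integrable_of_le_of_le {α : Type*} [MeasurableSpace α] {μ : Measure α} [IsFiniteMeasure μ]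
    {f : α → ℝ} (hf : AEStronglyMeasurable f μ) {c C : ℝ}
    (h1 : ∀ x, c ≤ f x) (h2 : ∀ x, f x ≤ C) : Integrable f μ := by
  refine ⟨hf, HasFiniteIntegral.of_bounded (C := max |c| |C|) (ae_of_all _ (fun x => ?_))⟩
  rw [Real.norm_eq_abs, abs_le]
  constructor
  · calc -(max |c| |C|) ≤ -|c| := by simp
      _ ≤ c := neg_abs_le c
      _ ≤ f x := h1 x
  · exact le_trans (h2 x) (le_trans (le_abs_self C) (le_max_right _ _))

lemma integral_mem_Icc {α : Type*} [MeasurableSpace α] {μ : Measure α} [IsProbabilityMeasure μ]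
    {f : α → ℝ} {c C : ℝ} (hf : AEStronglyMeasurable f μ)
    (h1 : ∀ x, c ≤ f x) (h2 : ∀ x, f x ≤ C) : (∫ x, f x ∂μ) ∈ Set.Icc c C := by
  have hint := integrable_of_le_of_le hf h1 h2
  constructor
  · calc c = ∫ _x, c ∂μ := by simp
      _ ≤ ∫ x, f x ∂μ := integral_mono (integrable_const c) hint h1
  · calc (∫ x, f x ∂μ) ≤ ∫ _x, C ∂μ := integral_mono hint (integrable_const C) h2
      _ = C := by simp

lemma measurable_extAssign {m n : ℕ} (hnm : n ≤ m) :
    Measurable (fun p : (Fin n → I) × (Fin m → I) => extAssign hnm p.1 p.2) := by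
  refine measurable_pi_lambda _ (fun i => ?_)
  unfold extAssign
  by_cases h : (i : ℕ) < n
  · simp only [dif_pos h]
    exact (measurable_pi_apply _).comp measurable_fst
  · simp only [dif_neg h]
    exact (measurable_pi_apply _).comp measurable_snd

lemma measurePreserving_extAssign {m n : ℕ} (hnm : n ≤ m) :
    MeasurePreserving (fun p : (Fin n → I) × (Fin m → I) => extAssign hnm p.1 p.2)
      (volume.prod volume) volume := by
  refine ⟨measurable_extAssign hnm, ?_⟩
  rw [volume_pi]
  refine (Measure.pi_eq fun s hs => ?_).symm
  rw [Measure.map_apply (measurable_extAssign hnm) (MeasurableSet.univ_pi hs)]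
  have hpre : (fun p : (Fin n → I) × (Fin m → I) => extAssign hnm p.1 p.2) ⁻¹'
      (Set.univ.pi s) =
      (Set.univ.pi fun j : Fin n => s (Fin.castLE hnm j)) ×ˢ
        (Set.univ.pi fun i : Fin m => if (i : ℕ) < n then Set.univ else s i) := by
    ext ⟨y, x⟩
    simp only [Set.mem_preimage, Set.mem_pi, Set.mem_univ, forall_true_left, Set.mem_prod,
      extAssign]
    constructor
    · intro h
      refine ⟨fun j => ?_, fun i => ?_⟩
      · have hj := h (Fin.castLE hnm j)
        have hjn : ((Fin.castLE hnm j : Fin m) : ℕ) < n := j.isLt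
        rw [dif_pos hjn] at hj
        convert hj using 2 <;> rfl
      · by_cases hi : (i : ℕ) < n
        · simp [hi]
        · have := h i
          rw [dif_neg hi] at this
          simpa [hi] using this
    · rintro ⟨h1, h2⟩ i
      by_cases hi : (i : ℕ) < n
      · rw [dif_pos hi]
        have := h1 ⟨(i : ℕ), hi⟩
        convert this using 2 <;> rfl
      · rw [dif_neg hi]
        have := h2 i
        simpa [hi] using this
  rw [hpre, Measure.prod_prod, volume_pi, Measure.pi_pi, Measure.pi_pi]
  have hsplit : ∀ i : Fin m,
      (volume : Measure I) (if (i : ℕ) < n then Set.univ else s i)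
        = if (i : ℕ) < n then 1 else volume (s i) := by
    intro i; split <;> simp
  simp_rw [hsplit]
  rw [Finset.prod_ite, Finset.prod_const_one, one_mul]
  have hbij : ∏ j : Fin n, (volume : Measure I) (s (Fin.castLE hnm j)) =
      ∏ i ∈ Finset.univ.filter (fun i : Fin m => (i : ℕ) < n), volume (s i) := by
    refine Finset.prod_bij (fun j _ => Fin.castLE hnm j) ?_ ?_ ?_ ?_
    · intro j _; simp [Finset.mem_filter, j.isLt]
    · intro a _ b _ h; exact Fin.castLE_injective hnm h
    · intro i hi
      simp only [Finset.mem_filter, Finset.mem_univ, true_and] at hi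
      exact ⟨⟨(i : ℕ), hi⟩, Finset.mem_univ _, Fin.ext rfl⟩
    · intro j _; rfl
  rw [hbij]
  exact Finset.prod_filter_mul_prod_filter_not Finset.univ (fun i : Fin m => (i : ℕ) < n)
    (fun i => (volume : Measure I) (s i))

lemma integral_comp_extAssign {m n : ℕ} (hnm : n ≤ m) (g : (Fin m → I) → ℝ)
    (hint : Integrable g (volume : Measure (Fin m → I))) :
    ∫ x : Fin m → I, g x = ∫ y : Fin n → I, ∫ x : Fin m → I, g (extAssign hnm y x) := by
  have mp := measurePreserving_extAssign hnm
  have hci : Integrable (fun p : (Fin n → I) × (Fin m → I) => g (extAssign hnm p.1 p.2))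
      (volume.prod volume) :=
    (mp.integrable_comp hint.aestronglyMeasurable).2 hint
  calc ∫ x : Fin m → I, g x
      = ∫ p : (Fin n → I) × (Fin m → I), g (extAssign hnm p.1 p.2) ∂(volume.prod volume) := by
        have hfm : AEStronglyMeasurable g
            (Measure.map (fun p : (Fin n → I) × (Fin m → I) => extAssign hnm p.1 p.2)
              (volume.prod volume)) := by
          rw [mp.map_eq]; exact hint.aestronglyMeasurable
        conv_lhs => rw [show (volume : Measure (Fin m → I)) =
            Measure.map (fun p : (Fin n → I) × (Fin m → I) => extAssign hnm p.1 p.2)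
              (volume.prod volume) from mp.map_eq.symm]
        exact integral_map mp.measurable.aemeasurable hfm
    _ = ∫ y : Fin n → I, ∫ x : Fin m → I, g (extAssign hnm y x) :=
        integral_prod _ hci

lemma edgeSet_top_fin2 :
    (⊤ : SimpleGraph (Fin 2)).edgeSet = {s((0 : Fin 2), (1 : Fin 2))} := by
  ext e
  refine Sym2.ind (fun i j => ?_) e
  simp only [SimpleGraph.mem_edgeSet, SimpleGraph.top_adj, Set.mem_singleton_iff]
  revert i j; decide

lemma edgeProd_top_fin2 (W : I → I → ℝ) (hsym : ∀ x y, W x y = W y x) (y : Fin 2 → I) :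
    edgeProd (⊤ : SimpleGraph (Fin 2)) W hsym y = W (y 0) (y 1) := by
  unfold edgeProd
  rw [Finset.prod_eq_single (s((0 : Fin 2), (1 : Fin 2)))]
  · rw [Sym2.lift_mk]
  · intro e he hne
    exfalso
    apply hne
    simp only [SimpleGraph.mem_edgeFinset, edgeSet_top_fin2, Set.mem_singleton_iff] at he
    exact he
  · intro h
    exfalso
    apply h
    simp only [SimpleGraph.mem_edgeFinset, edgeSet_top_fin2, Set.mem_singleton_iff]

lemma degree_top_fin2 (i : Fin 2) (inst : Fintype ((⊤ : SimpleGraph (Fin 2)).neighborSet i)) :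
    @SimpleGraph.degree (Fin 2) ⊤ i inst = 1 := by
  show (@SimpleGraph.neighborFinset (Fin 2) ⊤ i inst).card = 1
  have h : @SimpleGraph.neighborFinset (Fin 2) ⊤ i inst = Finset.univ.erase i := by
    ext j
    rw [SimpleGraph.mem_neighborFinset, Finset.mem_erase]
    simp [eq_comm, ne_comm]
  rw [h, Finset.card_erase_of_mem (Finset.mem_univ i), Finset.card_univ]
  rfl

lemma treeWeight_top_fin2 (W : I → I → ℝ) (hsym : ∀ x y, W x y = W y x) (y : Fin 2 → I) :
    treeWeight (⊤ : SimpleGraph (Fin 2)) W hsym y = (kernelDensity W)⁻¹ * W (y 0) (y 1) := by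
  unfold treeWeight
  rw [edgeProd_top_fin2]
  simp only [degree_top_fin2]
  norm_num

lemma integral_pair_eq_kernelDensity (W : I → I → ℝ)
    (hint : Integrable (Function.uncurry W) (volume : Measure (I × I))) :
    ∫ y : Fin 2 → I, W (y 0) (y 1) = kernelDensity W := by
  have h1 : ∫ y : Fin 2 → I, W (y 0) (y 1) = ∫ p : I × I, Function.uncurry W p :=
    (volume_preserving_piFinTwo (fun _ : Fin 2 => I)).integral_comp
      (MeasurableEquiv.measurableEmbedding _) (Function.uncurry W)
  rw [h1]
  rw [Measure.volume_eq_prod] at hint ⊢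
  exact integral_prod _ hint

/-- If the edge `(x₁,x₂)` (here the first two vertices, carrying the complete graph
`⊤ : SimpleGraph (Fin 2)` as labeled subtree) is smooth in the bipartite graph `H`,
then `H` is a Sidorenko graph: `t(H, W) ≥ d^{|E(H)|}`. -/
theorem smooth_edge_implies_sidorenko (m : ℕ) (h2m : 2 ≤ m)
    (H : SimpleGraph (Fin m)) (hbip : H.Colorable 2)
    (hedge : H.Adj (Fin.castLE h2m 0) (Fin.castLE h2m 1))
    (hsmooth : IsSmooth h2m H (⊤ : SimpleGraph (Fin 2)))
    (W : I → I → ℝ) (hmeas : Measurable (Function.uncurry W))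
    (hpos : ∃ c : ℝ, 0 < c ∧ ∀ x y, c ≤ W x y)
    (hbdd : ∃ C : ℝ, ∀ x y, W x y ≤ C)
    (hsym : ∀ x y, W x y = W y x) :
    (∫ x : Fin m → I, edgeProd H W hsym x)
      ≥ kernelDensity W ^ H.edgeFinset.card := by
  classical
  obtain ⟨c, hc, hcW⟩ := hpos
  obtain ⟨C, hCW⟩ := hbdd
  have hcC : c ≤ C := le_trans (hcW 0 0) (hCW 0 0)
  have hC0 : 0 < C := lt_of_lt_of_le hc hcC
  set a := Fin.castLE h2m 0 with ha
  set b := Fin.castLE h2m 1 with hb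
  set Hs := deleteTreeEdges h2m H (⊤ : SimpleGraph (Fin 2)) with hHs
  set N := Hs.edgeFinset.card with hN
  set d := kernelDensity W with hd
  -- basic measurability
  have hW01 : Measurable (fun y : Fin 2 → I => W (y 0) (y 1)) := by
    have h1 : Measurable fun y : Fin 2 → I => (y 0, y 1) :=
      (measurable_pi_apply _).prodMk (measurable_pi_apply _)
    exact hmeas.comp h1
  have hWx : ∀ x : I, Measurable (W x) := by
    intro x
    exact hmeas.comp measurable_prodMk_left
  have hintW : Integrable (Function.uncurry W) (volume : Measure (I × I)) :=
    integrable_of_le_of_le hmeas.aestronglyMeasurable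
      (fun p => hcW p.1 p.2) (fun p => hCW p.1 p.2)
  -- density bounds
  have hkdmeas : Measurable (kernelDeg W) := by
    have h := (MeasureTheory.StronglyMeasurable.integral_prod_right'
      (ν := (volume : Measure I)) hmeas.stronglyMeasurable).measurable
    exact h
  have hkd_mem : ∀ x, kernelDeg W x ∈ Set.Icc c C := fun x =>
    integral_mem_Icc (hWx x).aestronglyMeasurable (hcW x) (hCW x)
  have hd_mem : d ∈ Set.Icc c C := by
    rw [hd]
    exact integral_mem_Icc hkdmeas.aestronglyMeasurable
      (fun x => (hkd_mem x).1) (fun x => (hkd_mem x).2)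
  have hd_pos : 0 < d := lt_of_lt_of_le hc hd_mem.1
  -- edge decomposition
  have medgeH : Measurable (edgeProd H W hsym) := measurable_edgeProd H W hmeas hsym
  have medgeHs : Measurable (edgeProd Hs W hsym) := measurable_edgeProd Hs W hmeas hsym
  have hH_mem := edgeProd_mem_Icc H W hc.le hcW hCW hsym
  have hHs_mem := edgeProd_mem_Icc Hs W hc.le hcW hCW hsym
  have hintH : Integrable (edgeProd H W hsym) (volume : Measure (Fin m → I)) :=
    integrable_of_le_of_le medgeH.aestronglyMeasurable
      (fun x => (hH_mem x).1) (fun x => (hH_mem x).2)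
  have himg : (Sym2.map (Fin.castLE h2m) '' (⊤ : SimpleGraph (Fin 2)).edgeSet)
      = {s(a, b)} := by
    rw [edgeSet_top_fin2, Set.image_singleton, Sym2.map_pair_eq]
  have hHsSet : Hs.edgeSet = H.edgeSet \ {s(a, b)} := by
    rw [hHs]
    unfold deleteTreeEdges
    rw [SimpleGraph.edgeSet_deleteEdges, himg]
  have habH : s(a, b) ∈ H.edgeSet := (H.mem_edgeSet).2 hedge
  have hnotmem : s(a, b) ∉ Hs.edgeFinset := by
    simp [SimpleGraph.mem_edgeFinset, hHsSet]
  have hfinsplit : H.edgeFinset = insert s(a, b) Hs.edgeFinset := by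
    ext e
    simp only [Finset.mem_insert, SimpleGraph.mem_edgeFinset, hHsSet, Set.mem_diff,
      Set.mem_singleton_iff]
    constructor
    · intro h
      by_cases he : e = s(a, b)
      · exact Or.inl he
      · exact Or.inr ⟨h, he⟩
    · rintro (rfl | ⟨h, _⟩)
      · exact habH
      · exact h
  have hcard : H.edgeFinset.card = N + 1 := by
    rw [hfinsplit, Finset.card_insert_of_notMem hnotmem, hN]
  have hsplitProd : ∀ x, edgeProd H W hsym x = W (x a) (x b) * edgeProd Hs W hsym x := by
    intro x
    unfold edgeProd
    rw [hfinsplit, Finset.prod_insert hnotmem, Sym2.lift_mk]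
  -- extension evaluates labeled vertices
  have hexta : ∀ (y : Fin 2 → I) (x : Fin m → I), extAssign h2m y x a = y 0 := by
    intro y x
    show (if h : ((a : Fin m) : ℕ) < 2 then y ⟨(a : ℕ), h⟩ else x a) = y 0
    rw [dif_pos (show ((a : Fin m) : ℕ) < 2 from by norm_num [ha])]
    congr 1
  have hextb : ∀ (y : Fin 2 → I) (x : Fin m → I), extAssign h2m y x b = y 1 := by
    intro y x
    show (if h : ((b : Fin m) : ℕ) < 2 then y ⟨(b : ℕ), h⟩ else x b) = y 1
    rw [dif_pos (show ((b : Fin m) : ℕ) < 2 from by norm_num [hb])]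
    congr 1
  -- the restricted density F
  set F := fun y : Fin 2 → I => restrictedDensity h2m Hs W hsym y with hF
  have hFmeas : Measurable F := by
    have h := (MeasureTheory.StronglyMeasurable.integral_prod_right'
      (ν := (volume : Measure (Fin m → I)))
      (medgeHs.comp (measurable_extAssign h2m)).stronglyMeasurable).measurable
    exact h
  have hFmem : ∀ y, F y ∈ Set.Icc (c ^ N) (C ^ N) := by
    intro y
    have hm : Measurable fun x : Fin m → I => edgeProd Hs W hsym (extAssign h2m y x) :=
      (medgeHs.comp (measurable_extAssign h2m)).comp measurable_prodMk_left
    exact integral_mem_Icc hm.aestronglyMeasurable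
      (fun x => (hHs_mem (extAssign h2m y x)).1) (fun x => (hHs_mem (extAssign h2m y x)).2)
  have hcN : 0 < c ^ N := pow_pos hc N
  -- t = ∫ W(y0,y1) F(y)
  set t := ∫ x : Fin m → I, edgeProd H W hsym x with ht
  have ht_eq : t = ∫ y : Fin 2 → I, W (y 0) (y 1) * F y := by
    rw [ht, integral_comp_extAssign h2m _ hintH]
    refine integral_congr_ae (ae_of_all _ fun y => ?_)
    have : ∀ x : Fin m → I, edgeProd H W hsym (extAssign h2m y x)
        = W (y 0) (y 1) * edgeProd Hs W hsym (extAssign h2m y x) := by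
      intro x
      rw [hsplitProd, hexta, hextb]
    simp_rw [this]
    rw [integral_const_mul]
    rfl
  have ht_mem : t ∈ Set.Icc (c ^ (N + 1)) (C ^ (N + 1)) := by
    rw [ht, ← hcard]
    exact integral_mem_Icc medgeH.aestronglyMeasurable
      (fun x => (hH_mem x).1) (fun x => (hH_mem x).2)
  have ht_pos : 0 < t := lt_of_lt_of_le (pow_pos hc (N + 1)) ht_mem.1
  -- ∫ W(y0,y1) = d
  have hWint2 : ∫ y : Fin 2 → I, W (y 0) (y 1) = d :=
    integral_pair_eq_kernelDensity W hintW
  -- the tilted probability measure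
  set ρ := fun y : Fin 2 → I => d⁻¹ * W (y 0) (y 1) with hρ
  have hρmeas : Measurable ρ := measurable_const.mul hW01
  have hρ_nonneg : ∀ y, 0 ≤ ρ y :=
    fun y => mul_nonneg (inv_nonneg.2 hd_pos.le) (le_trans hc.le (hcW _ _))
  have hρint : Integrable ρ (volume : Measure (Fin 2 → I)) :=
    integrable_of_le_of_le hρmeas.aestronglyMeasurable
      (fun y => mul_le_mul_of_nonneg_left (hcW _ _) (inv_nonneg.2 hd_pos.le))
      (fun y => mul_le_mul_of_nonneg_left (hCW _ _) (inv_nonneg.2 hd_pos.le))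
  set dens := fun y : Fin 2 → I => Real.toNNReal (ρ y) with hdens
  have hdens_meas : Measurable dens := hρmeas.real_toNNReal
  set ν := (volume : Measure (Fin 2 → I)).withDensity (fun y => (dens y : ℝ≥0∞)) with hν
  have hρ_int_one : ∫ y, ρ y = 1 := by
    have : ∫ y, ρ y = d⁻¹ * ∫ y : Fin 2 → I, W (y 0) (y 1) := by
      rw [hρ]; exact integral_const_mul _ _
    rw [this, hWint2, inv_mul_cancel₀ hd_pos.ne']
  have hνprob : IsProbabilityMeasure ν := by
    constructor
    rw [hν, withDensity_apply _ MeasurableSet.univ, Measure.restrict_univ]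
    have h1 : ∀ y, ((dens y : ℝ≥0) : ℝ≥0∞) = ENNReal.ofReal (ρ y) := fun y => rfl
    simp_rw [h1]
    rw [← ofReal_integral_eq_lintegral_ofReal hρint (ae_of_all _ hρ_nonneg), hρ_int_one]
    simp
  haveI := hνprob
  have hν_int : ∀ f : (Fin 2 → I) → ℝ, ∫ y, f y ∂ν = ∫ y, ρ y * f y := by
    intro f
    rw [hν, integral_withDensity_eq_integral_smul hdens_meas]
    refine integral_congr_ae (ae_of_all _ fun y => ?_)
    show dens y • f y = ρ y * f y
    rw [NNReal.smul_def, Real.coe_toNNReal _ (hρ_nonneg y), smul_eq_mul]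
  -- Jensen's inequality
  have hconc : ConcaveOn ℝ (Set.Icc (c ^ N) (C ^ N)) Real.log :=
    strictConcaveOn_log_Ioi.concaveOn.subset
      (fun x hx => lt_of_lt_of_le hcN hx.1) (convex_Icc _ _)
  have hcont : ContinuousOn Real.log (Set.Icc (c ^ N) (C ^ N)) :=
    Real.continuousOn_log.mono (fun x hx => ne_of_gt (lt_of_lt_of_le hcN hx.1))
  have hFint : Integrable F ν :=
    integrable_of_le_of_le hFmeas.aestronglyMeasurable
      (fun y => (hFmem y).1) (fun y => (hFmem y).2)
  have hlogFint : Integrable (Real.log ∘ F) ν := by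
    refine integrable_of_le_of_le ((Real.measurable_log.comp hFmeas).aestronglyMeasurable)
      (c := Real.log (c ^ N)) (C := Real.log (C ^ N)) (fun y => ?_) (fun y => ?_)
    · exact Real.log_le_log hcN (hFmem y).1
    · exact Real.log_le_log (lt_of_lt_of_le hcN (hFmem y).1) (hFmem y).2
  have hjensen : (∫ y, Real.log (F y) ∂ν) ≤ Real.log (∫ y, F y ∂ν) :=
    hconc.le_map_integral hcont isClosed_Icc
      (ae_of_all _ fun y => hFmem y) hFint hlogFint
  -- identify the two sides
  have hFν : ∫ y, F y ∂ν = d⁻¹ * t := by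
    rw [hν_int F, ht_eq]
    have : ∀ y : Fin 2 → I, ρ y * F y = d⁻¹ * (W (y 0) (y 1) * F y) := by
      intro y; rw [hρ]; ring
    simp_rw [this]
    rw [integral_const_mul]
  have hlogν : ∫ y, Real.log (F y) ∂ν
      = ∫ y : Fin 2 → I, treeWeight (⊤ : SimpleGraph (Fin 2)) W hsym y *
          Real.log (restrictedDensity h2m Hs W hsym y) := by
    rw [hν_int]
    refine integral_congr_ae (ae_of_all _ fun y => ?_)
    show ρ y * Real.log (F y)
      = treeWeight (⊤ : SimpleGraph (Fin 2)) W hsym y *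
          Real.log (restrictedDensity h2m Hs W hsym y)
    rw [treeWeight_top_fin2, ← hd]
  -- smoothness
  have hsm := hsmooth W hmeas ⟨c, hc, hcW⟩ ⟨C, hCW⟩ hsym
  rw [← hHs, ← hN, ← hd] at hsm
  have hchain : (N : ℝ) * Real.log d ≤ Real.log (d⁻¹ * t) := by
    calc (N : ℝ) * Real.log d
        ≤ ∫ y : Fin 2 → I, treeWeight (⊤ : SimpleGraph (Fin 2)) W hsym y *
            Real.log (restrictedDensity h2m Hs W hsym y) := hsm
      _ = ∫ y, Real.log (F y) ∂ν := hlogν.symm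
      _ ≤ Real.log (∫ y, F y ∂ν) := hjensen
      _ = Real.log (d⁻¹ * t) := by rw [hFν]
  have hdinvt_pos : 0 < d⁻¹ * t := mul_pos (inv_pos.2 hd_pos) ht_pos
  have hkey : d ^ N ≤ d⁻¹ * t := by
    have hlogs : Real.log (d ^ N) ≤ Real.log (d⁻¹ * t) := by
      rw [Real.log_pow]; exact hchain
    exact (Real.log_le_log_iff (pow_pos hd_pos N) hdinvt_pos).1 hlogs
  have hfinal : d ^ (N + 1) ≤ t := by
    calc d ^ (N + 1) = d * d ^ N := by ring
      _ ≤ d * (d⁻¹ * t) := mul_le_mul_of_nonneg_left hkey hd_pos.le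
      _ = t := by field_simp
  rw [ge_iff_le, hcard]
  exact hfinal
end
end
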